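/- arXiv:2511.08905 — 3 statements merged into one kernel-verified Lean document; each statement's English description precedes it below -/
import Mathlib

section
/- Let d ≥ 1 and let M be a d×d real matrix all of whose entries are nonzero (a dense matrix). If x, x' : Fin d → ℝ differ in exactly one coordinate (there is an index l with x' l ≠ x l and x' j = x j for all j ≠ l), then for every index k we have (M.mulVec x') k ≠ (M.mulVec x) k; in particular the Hamming distance between M.mulVec x and M.mulVec x' equals d, so at least half of the coordinates of the ciphertext change. -/
/-- **Diffusion (forward direction).** If `M` is a `d × d` real matrix all of whose
entries are nonzero, and the plaintexts `x, x'` differ in exactly one coordinate `l`,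
then every coordinate of the ciphertext `M.mulVec x` changes; in particular the
Hamming distance between `M.mulVec x` and `M.mulVec x'` equals `d`. -/
theorem diffusion_forward (d : ℕ) (hd : 1 ≤ d)
    (M : Matrix (Fin d) (Fin d) ℝ) (hM : ∀ i j, M i j ≠ 0)
    (x x' : Fin d → ℝ) (l : Fin d)
    (hl : x' l ≠ x l) (hother : ∀ j, j ≠ l → x' j = x j) :
    (∀ k, M.mulVec x' k ≠ M.mulVec x k) ∧
      hammingDist (M.mulVec x) (M.mulVec x') = d := by
  have hk : ∀ k, M.mulVec x' k ≠ M.mulVec x k := by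
    intro k h
    have hsum : M.mulVec x' k - M.mulVec x k = M k l * (x' l - x l) := by
      simp only [Matrix.mulVec, dotProduct, ← Finset.sum_sub_distrib]
      rw [Finset.sum_eq_single l]
      · ring
      · intro j _ hj
        rw [hother j hj]; ring
      · simp
    rw [h, sub_self] at hsum
    exact hl (sub_eq_zero.mp (mul_left_cancel₀ (hM k l)
      (by rw [← hsum]; ring)).symm ▸ rfl)
  refine ⟨hk, ?_⟩
  rw [hammingDist]
  rw [Finset.filter_true_of_mem (fun i _ => (hk i).symm)]
  simp
end

section
/- Let d ≥ 1 and let M be an invertible d×d real matrix such that every entry of M⁻¹ is nonzero. If y, y' : Fin d → ℝ differ in exactly one coordinate, then the unique solutions x = M⁻¹.mulVec y and x' = M⁻¹.mulVec y' of the equations M x = y and M x' = y' differ in every coordinate; in particular the Hamming distance between x and x' equals d. -/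
/-- **Diffusion (converse direction).** If `M` is an invertible `d × d` real matrix
whose inverse has all entries nonzero, and the ciphertexts `y, y'` differ in exactly
one coordinate, then the unique solutions `x = M⁻¹ y` and `x' = M⁻¹ y'` of
`M x = y` and `M x' = y'` differ in every coordinate; in particular their Hamming
distance equals `d`. -/
theorem diffusion_converse (d : ℕ) (hd : 1 ≤ d)
    (M : Matrix (Fin d) (Fin d) ℝ) (hM : IsUnit M.det)
    (hinv : ∀ i j, M⁻¹ i j ≠ 0)
    (y y' : Fin d → ℝ) (l : Fin d)
    (hl : y' l ≠ y l) (hother : ∀ j, j ≠ l → y' j = y j) :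
    (M.mulVec (M⁻¹.mulVec y) = y ∧ M.mulVec (M⁻¹.mulVec y') = y') ∧
    (∀ k, M⁻¹.mulVec y' k ≠ M⁻¹.mulVec y k) ∧
      hammingDist (M⁻¹.mulVec y) (M⁻¹.mulVec y') = d := by
  have hsol : ∀ z : Fin d → ℝ, M.mulVec (M⁻¹.mulVec z) = z := by
    intro z
    rw [Matrix.mulVec_mulVec, Matrix.mul_nonsing_inv _ hM, Matrix.one_mulVec]
  have hk : ∀ k, M⁻¹.mulVec y' k ≠ M⁻¹.mulVec y k := by
    intro k h
    have hdiff : M⁻¹.mulVec y' k - M⁻¹.mulVec y k = M⁻¹ k l * (y' l - y l) := by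
      simp only [Matrix.mulVec, dotProduct, ← Finset.sum_sub_distrib, ← mul_sub]
      rw [Finset.sum_eq_single l]
      · intro j _ hj
        rw [hother j hj, sub_self, mul_zero]
      · intro hmem; exact absurd (Finset.mem_univ l) hmem
    rw [h, sub_self] at hdiff
    exact hinv k l (by
      rcases mul_eq_zero.mp hdiff.symm with h1 | h1
      · exact h1
      · exact absurd (sub_eq_zero.mp h1) hl)
  refine ⟨⟨hsol y, hsol y'⟩, hk, ?_⟩
  have : ∀ k : Fin d, M⁻¹.mulVec y k ≠ M⁻¹.mulVec y' k := fun k h => hk k h.symm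
  rw [hammingDist]
  simp only [ne_eq]
  rw [Finset.filter_true_of_mem (fun k _ => this k), Finset.card_univ, Fintype.card_fin]
end

section
/- Let d ≥ 3 be a natural number, let (Ω, μ) be a probability space, and let (A_{j,k})_{(j,k) ∈ Fin d × Fin d} be an independent family of d² events, where A_{j,k} is interpreted as the event that the (j,k)-entries of the matrices M(K) and M(K') coincide, such that μ(A_{j,k}) ≤ e^{−d} for every (j,k). Then the probability of the event C that more than half of the entries differ — i.e. that the number of pairs (j,k) with ω ∈ A_{j,k} is strictly less than ⌈d²/2⌉ — satisfies μ(C) ≥ 1 − e^{−d}. -/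
open MeasureTheory Classical
open scoped ENNReal

/-- **Lemma 1 (more than half of the matrix entries differ).** Let `d ≥ 3` and let
`(A p)_{p ∈ Fin d × Fin d}` be an independent family of `d²` events (independence
meaning that for every `S ⊆ Fin d × Fin d`,
`μ (⋂_{p ∈ S} A p) = ∏_{p ∈ S} μ (A p)`), where `A (j,k)` is the event that the
`(j,k)`-entries of `M(K)` and `M(K')` coincide, each of probability at most
`e^{-d}`. Then the event `C` that more than half of the entries differ — i.e. that
the number of pairs `(j,k)` whose coincidence event occurs is strictly less than
`⌈d²/2⌉` — has probability at least `1 - e^{-d}`. -/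
theorem lemma_confusion_entries {Ω : Type*} [MeasurableSpace Ω]
    (μ : Measure Ω) [IsProbabilityMeasure μ]
    (d : ℕ) (hd : 3 ≤ d) (A : Fin d × Fin d → Set Ω)
    (hA : ∀ p, μ (A p) ≤ ENNReal.ofReal (Real.exp (-(d : ℝ))))
    (hind : ∀ S ⊆ (Finset.univ : Finset (Fin d × Fin d)),
      μ (⋂ p ∈ S, A p) = ∏ p ∈ S, μ (A p)) :
    1 - ENNReal.ofReal (Real.exp (-(d : ℝ))) ≤
      μ {ω : Ω |
        (Finset.univ.filter fun p : Fin d × Fin d => ω ∈ A p).card < (d ^ 2 + 1) / 2} := by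
  set m : ℕ := (d ^ 2 + 1) / 2 with hm
  set C : Set Ω := {ω : Ω |
      (Finset.univ.filter fun p : Fin d × Fin d => ω ∈ A p).card < m} with hC
  set B : Set Ω := {ω : Ω |
      m ≤ (Finset.univ.filter fun p : Fin d × Fin d => ω ∈ A p).card} with hB
  -- B is covered by the union over m-element subsets S of the intersections ⋂_{p∈S} A p
  have hBsub : B ⊆ ⋃ S ∈ (Finset.univ : Finset (Fin d × Fin d)).powersetCard m,
      ⋂ p ∈ S, A p := by
    intro ω hω
    obtain ⟨S, hS, hScard⟩ := Finset.exists_subset_card_eq hω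
    simp only [Set.mem_iUnion]
    refine ⟨S, Finset.mem_powersetCard.mpr ⟨Finset.subset_univ _, hScard⟩, ?_⟩
    simp only [Set.mem_iInter]
    intro p hp
    exact (Finset.mem_filter.mp (hS hp)).2
  -- the key real inequality: 2^(d²) · e^(-dm) ≤ e^(-d)
  have hreal : (2 : ℝ) ^ (d ^ 2) * Real.exp (-(d : ℝ)) ^ m ≤ Real.exp (-(d : ℝ)) := by
    have h2m : (d : ℝ) ^ 2 ≤ 2 * (m : ℝ) := by
      have : d ^ 2 ≤ 2 * m := by
        have h := Nat.lt_div_mul_add (a := d ^ 2 + 1) (b := 2) (by norm_num)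
        omega
      exact_mod_cast this
    have hd3 : (3 : ℝ) ≤ (d : ℝ) := by exact_mod_cast hd
    have hlog : Real.log 2 ≤ 1 := by
      have := Real.log_two_lt_d9
      linarith
    have hkey : (d : ℝ) ^ 2 * Real.log 2 + (m : ℝ) * (-(d : ℝ)) ≤ -(d : ℝ) := by
      have hd0 : (0 : ℝ) ≤ (d : ℝ) := by linarith
      have h1 : (d : ℝ) ^ 2 * (d : ℝ) ≤ 2 * (m : ℝ) * (d : ℝ) :=
        mul_le_mul_of_nonneg_right h2m hd0
      have h2 : (d : ℝ) ^ 2 * Real.log 2 ≤ (d : ℝ) ^ 2 := by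
        nlinarith [sq_nonneg (d : ℝ)]
      nlinarith [sq_nonneg ((d : ℝ) - 3), mul_le_mul_of_nonneg_right h2m hd0]
    have h2pow : (2 : ℝ) ^ (d ^ 2) = Real.exp ((d : ℝ) ^ 2 * Real.log 2) := by
      rw [show (2:ℝ) = Real.exp (Real.log 2) from (Real.exp_log (by norm_num)).symm,
        ← Real.exp_nat_mul]
      rw [Real.log_exp]
      congr 1
      push_cast
      ring
    rw [h2pow, ← Real.exp_nat_mul, ← Real.exp_add]
    exact Real.exp_le_exp.mpr hkey
  -- hence μ B ≤ e^{-d}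
  have hBle : μ B ≤ ENNReal.ofReal (Real.exp (-(d : ℝ))) := by
    calc μ B ≤ μ (⋃ S ∈ (Finset.univ : Finset (Fin d × Fin d)).powersetCard m,
          ⋂ p ∈ S, A p) := measure_mono hBsub
      _ ≤ ∑ S ∈ (Finset.univ : Finset (Fin d × Fin d)).powersetCard m,
          μ (⋂ p ∈ S, A p) := measure_biUnion_finset_le _ _
      _ ≤ ∑ S ∈ (Finset.univ : Finset (Fin d × Fin d)).powersetCard m,
          ENNReal.ofReal (Real.exp (-(d : ℝ))) ^ m := by
        refine Finset.sum_le_sum fun S hS => ?_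
        obtain ⟨hSsub, hScard⟩ := Finset.mem_powersetCard.mp hS
        rw [hind S hSsub]
        calc ∏ p ∈ S, μ (A p)
            ≤ ∏ _p ∈ S, ENNReal.ofReal (Real.exp (-(d : ℝ))) :=
              Finset.prod_le_prod' fun p _ => hA p
          _ = ENNReal.ofReal (Real.exp (-(d : ℝ))) ^ m := by
              rw [Finset.prod_const, hScard]
      _ = (((Finset.univ : Finset (Fin d × Fin d)).powersetCard m).card : ℝ≥0∞) *
          ENNReal.ofReal (Real.exp (-(d : ℝ))) ^ m := by
        rw [Finset.sum_const, nsmul_eq_mul]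
      _ ≤ (2 : ℝ≥0∞) ^ (d ^ 2) * ENNReal.ofReal (Real.exp (-(d : ℝ))) ^ m := by
        gcongr
        have hcard : ((Finset.univ : Finset (Fin d × Fin d)).powersetCard m).card
            ≤ 2 ^ (d ^ 2) := by
          calc ((Finset.univ : Finset (Fin d × Fin d)).powersetCard m).card
              ≤ ((Finset.univ : Finset (Fin d × Fin d)).powerset).card :=
                Finset.card_le_card fun S hS =>
                  Finset.mem_powerset.mpr (Finset.mem_powersetCard.mp hS).1
            _ = 2 ^ (d ^ 2) := by
                simp [Finset.card_powerset, sq]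
        calc (((Finset.univ : Finset (Fin d × Fin d)).powersetCard m).card : ℝ≥0∞)
            ≤ ((2 ^ (d ^ 2) : ℕ) : ℝ≥0∞) := by exact_mod_cast hcard
          _ = (2 : ℝ≥0∞) ^ (d ^ 2) := by push_cast; ring
      _ ≤ ENNReal.ofReal (Real.exp (-(d : ℝ))) := by
        have : (2 : ℝ≥0∞) ^ (d ^ 2) * ENNReal.ofReal (Real.exp (-(d : ℝ))) ^ m
            = ENNReal.ofReal ((2 : ℝ) ^ (d ^ 2) * Real.exp (-(d : ℝ)) ^ m) := by
          rw [ENNReal.ofReal_mul (by positivity),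
            ENNReal.ofReal_pow (Real.exp_nonneg _),
            ENNReal.ofReal_pow (by norm_num : (0:ℝ) ≤ 2), ENNReal.ofReal_ofNat]
        rw [this]
        exact ENNReal.ofReal_le_ofReal hreal
  -- conclude
  have hunion : (Set.univ : Set Ω) ⊆ B ∪ C := by
    intro ω _
    by_cases h : (Finset.univ.filter fun p : Fin d × Fin d => ω ∈ A p).card < m
    · exact Or.inr h
    · exact Or.inl (le_of_not_gt h)
  have h1 : (1 : ℝ≥0∞) ≤ μ B + μ C := by
    calc (1 : ℝ≥0∞) = μ Set.univ := (measure_univ).symm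
      _ ≤ μ (B ∪ C) := measure_mono hunion
      _ ≤ μ B + μ C := measure_union_le _ _
  refine tsub_le_iff_right.mpr ?_
  calc (1 : ℝ≥0∞) ≤ μ B + μ C := h1
    _ ≤ ENNReal.ofReal (Real.exp (-(d : ℝ))) + μ C := by gcongr
    _ = μ C + ENNReal.ofReal (Real.exp (-(d : ℝ))) := add_comm _ _
end
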